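/- Let m, t, k, d be naturals with t ≥ 1, d ≥ k ≥ 1, and let r = m mod t. At the MBR point (α = 1, β = t/d as rationals, so tα = dβ), if r ≤ ⌊(d-k+1)·t/d⌋, then for every ℓ with 0 ≤ ℓ ≤ r, the functional-repair capacity B_F*(ℓ) = ℓ·k + ⌊(m-ℓ)/t⌋·∑_{i=0}^{k-1} min(t, (d-i)·t/d) + ∑_{i=0}^{k-1} min((m-ℓ) mod t, (d-i)·t/d) equals B_F*(0), i.e., local help with ℓ ≤ m mod t local nodes gives no capacity gain. -/

import Mathlib

/-- Functional-repair capacity at the MBR point `α = 1`, `β = t/d`, as a rational,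
    with `ℓ` local helper nodes: `B_F*(ℓ) = ℓk + ⌊(m-ℓ)/t⌋·∑ min(t,(d-i)t/d)
    + ∑ min((m-ℓ) mod t, (d-i)t/d)`. -/
def BFstarMBR (m t k d ℓ : ℕ) : ℚ :=
  (ℓ : ℚ) * k
    + (((m - ℓ) / t : ℕ) : ℚ) *
        ∑ i ∈ Finset.range k, min (t : ℚ) (((d - i : ℕ) : ℚ) * t / d)
    + ∑ i ∈ Finset.range k, min ((((m - ℓ) % t : ℕ)) : ℚ) (((d - i : ℕ) : ℚ) * t / d)

theorem no_gain_from_few_local_helpers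
    (m t k d : ℕ)
    (ht : 1 ≤ t) (hk : 1 ≤ k) (hkd : k ≤ d)
    (hm : t + m % t ≤ m)
    (hr : m % t ≤ (d - k + 1) * t / d) :
    ∀ ℓ ≤ m % t, BFstarMBR m t k d ℓ = BFstarMBR m t k d 0 := by
  intro ℓ hℓ
  have htpos : 0 < t := ht
  have hdpos : 0 < d := lt_of_lt_of_le hk hkd
  have hrlt : m % t < t := Nat.mod_lt _ htpos
  have hdm : t * (m / t) + m % t = m := Nat.div_add_mod m t
  have hmod : ∀ j ≤ m % t, (m - j) % t = m % t - j := by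
    intro j hj
    have h1 : m - j = t * (m / t) + (m % t - j) := by omega
    rw [h1, Nat.mul_add_mod, Nat.mod_eq_of_lt (by omega)]
  have hdiv : ∀ j ≤ m % t, (m - j) / t = m / t := by
    intro j hj
    have h1 : m - j = t * (m / t) + (m % t - j) := by omega
    rw [h1, Nat.mul_add_div htpos, Nat.div_eq_of_lt (show m % t - j < t by omega), Nat.add_zero]
  -- the bound: for j ≤ m % t and i < k, ((m%t - j : ℕ) : ℚ) ≤ (d-i)*t/d
  have hbound : ∀ j ≤ m % t, ∀ i ∈ Finset.range k,
      min (((m % t - j : ℕ)) : ℚ) (((d - i : ℕ) : ℚ) * t / d) = ((m % t - j : ℕ) : ℚ) := by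
    intro j hj i hi
    rw [Finset.mem_range] at hi
    apply min_eq_left
    have h1 : ((m % t : ℕ) : ℚ) ≤ ((d - k + 1 : ℕ) : ℚ) * t / d := by
      have := Nat.cast_div_le (α := ℚ) (m := (d - k + 1) * t) (n := d)
      calc ((m % t : ℕ) : ℚ) ≤ (((d - k + 1) * t / d : ℕ) : ℚ) := by exact_mod_cast hr
        _ ≤ (((d - k + 1) * t : ℕ) : ℚ) / d := this
        _ = ((d - k + 1 : ℕ) : ℚ) * t / d := by push_cast; ring
    have h2 : ((d - k + 1 : ℕ) : ℚ) * t / d ≤ ((d - i : ℕ) : ℚ) * t / d := by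
      gcongr
      exact_mod_cast (by omega : d - k + 1 ≤ d - i)
    calc ((m % t - j : ℕ) : ℚ) ≤ ((m % t : ℕ) : ℚ) := by exact_mod_cast Nat.sub_le _ _
      _ ≤ _ := le_trans h1 h2
  unfold BFstarMBR
  rw [hdiv ℓ hℓ, hdiv 0 (Nat.zero_le _), hmod ℓ hℓ, hmod 0 (Nat.zero_le _),
    Finset.sum_congr rfl (hbound ℓ hℓ), Finset.sum_congr rfl (hbound 0 (Nat.zero_le _)),
    Finset.sum_const, Finset.sum_const, Finset.card_range]
  have h3 : ((m % t - ℓ : ℕ) : ℚ) = ((m % t : ℕ) : ℚ) - ℓ := by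
    push_cast [hℓ]; ring
  simp only [Nat.sub_zero, nsmul_eq_mul, h3, Nat.cast_zero]
  ring
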